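/- Let (b_n)_{n∈ℕ} be a sequence of pairwise coprime positive integers with Σ_{n∈ℕ} 1/b_n < ∞, and let 𝔉 = ℤ \ ⋃_{n∈ℕ} b_nℤ be the set of integers divisible by no b_n. Then the density of 𝔉 with respect to the Følner sequence Φ_N = {−N, …, N} in (ℤ, +) exists and equals ∏_{n∈ℕ} (1 − 1/b_n); that is, lim_{N→∞} |𝔉 ∩ {−N, …, N}|/(2N+1) = ∏_{n∈ℕ} (1 − 1/b_n). -/

import Mathlib

open Finset Filter Topology

private lemma count_shift (p : ℤ → Prop) [DecidablePred p] (P : ℕ)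
    (hper : ∀ k : ℤ, p (k + P) ↔ p k) (a : ℤ) :
    ((Finset.Ico a (a + P)).filter p).card = ((Finset.Ico (a+1) (a + 1 + P)).filter p).card := by
  rcases Nat.eq_zero_or_pos P with h | h
  · subst h; simp
  have hP : (0:ℤ) < P := by exact_mod_cast h
  have e1 : Finset.Ico a (a + 1 + P) = Finset.Ico a (a+1) ∪ Finset.Ico (a+1) (a+1+P) :=
    (Finset.Ico_union_Ico_eq_Ico (by omega) (by omega)).symm
  have e2 : Finset.Ico a (a + 1 + P) = Finset.Ico a (a+P) ∪ Finset.Ico (a+P) (a+1+P) :=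
    (Finset.Ico_union_Ico_eq_Ico (by omega) (by omega)).symm
  have s1 : Finset.Ico a (a+1) = {a} := by
    ext k; simp; omega
  have s2 : Finset.Ico (a+P) (a+1+P) = {a + P} := by
    ext k; simp; omega
  have c1 : ((Finset.Ico a (a + 1 + P)).filter p).card
      = ((Finset.Ico a (a+1)).filter p).card + ((Finset.Ico (a+1) (a+1+P)).filter p).card := by
    rw [e1, Finset.filter_union, Finset.card_union_of_disjoint]
    exact Finset.disjoint_filter_filter (Finset.Ico_disjoint_Ico_consecutive _ _ _)
  have c2 : ((Finset.Ico a (a + 1 + P)).filter p).card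
      = ((Finset.Ico a (a+P)).filter p).card + ((Finset.Ico (a+P) (a+1+P)).filter p).card := by
    rw [e2, Finset.filter_union, Finset.card_union_of_disjoint]
    exact Finset.disjoint_filter_filter (Finset.Ico_disjoint_Ico_consecutive _ _ _)
  have hpa : p (a + P) ↔ p a := hper a
  rw [s1] at c1; rw [s2] at c2
  rw [Finset.filter_singleton] at c1 c2
  by_cases hp : p a
  · rw [if_pos hp] at c1; rw [if_pos (hpa.mpr hp)] at c2; simp at c1 c2; omega
  · rw [if_neg hp] at c1; rw [if_neg (fun h => hp (hpa.mp h))] at c2; simp at c1 c2; omega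

private lemma count_const (p : ℤ → Prop) [DecidablePred p] (P : ℕ)
    (hper : ∀ k : ℤ, p (k + P) ↔ p k) (a : ℤ) :
    ((Finset.Ico a (a + P)).filter p).card = ((Finset.Ico (0:ℤ) (P:ℤ)).filter p).card := by
  induction a using Int.induction_on with
  | zero => simp
  | succ n ih => rw [← ih]; exact (count_shift p P hper n).symm
  | pred n ih => rw [← ih]; have := count_shift p P hper (-(n:ℤ) - 1); simpa using this

private lemma count_blocks (p : ℤ → Prop) [DecidablePred p] (P : ℕ)
    (hper : ∀ k : ℤ, p (k + P) ↔ p k) (q : ℕ) (a : ℤ) :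
    ((Finset.Ico a (a + q * P)).filter p).card
      = q * ((Finset.Ico (0:ℤ) (P:ℤ)).filter p).card := by
  induction q generalizing a with
  | zero => simp
  | succ q ih =>
    have e : Finset.Ico a (a + (q+1 : ℕ) * P) = Finset.Ico a (a+P) ∪ Finset.Ico (a+P) (a + (q+1:ℕ) * P) := by
      refine (Finset.Ico_union_Ico_eq_Ico (by omega) ?_).symm
      push_cast; nlinarith [Int.natCast_nonneg P, Int.natCast_nonneg q]
    have e2 : a + (q+1:ℕ) * P = (a + P) + q * P := by push_cast; ring
    rw [e, Finset.filter_union, Finset.card_union_of_disjoint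
      (Finset.disjoint_filter_filter (Finset.Ico_disjoint_Ico_consecutive _ _ _)),
      count_const p P hper a, e2, ih (a+P)]
    ring

private lemma periodic_density (p : ℤ → Prop) [DecidablePred p] (P : ℕ) (hP : 0 < P)
    (hper : ∀ k : ℤ, p (k + P) ↔ p k) :
    Tendsto (fun N : ℕ => (((Finset.Icc (-(N:ℤ)) N).filter p).card : ℝ) / (2*N+1)) atTop
      (𝓝 ((((Finset.Ico (0:ℤ) (P:ℤ)).filter p).card : ℝ) / P)) := by
  set c : ℕ := ((Finset.Ico (0:ℤ) (P:ℤ)).filter p).card with hc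
  have hcP : c ≤ P := by
    calc c ≤ (Finset.Ico (0:ℤ) (P:ℤ)).card := Finset.card_filter_le _ _
    _ = P := by rw [Int.card_Ico]; simp
  -- counting estimate
  have key : ∀ N : ℕ, ((2*N+1)/P) * c ≤ ((Finset.Icc (-(N:ℤ)) N).filter p).card ∧
      ((Finset.Icc (-(N:ℤ)) N).filter p).card ≤ ((2*N+1)/P) * c + P := by
    intro N
    set q : ℕ := (2*N+1)/P with hq
    have hqP : q * P ≤ 2*N+1 := Nat.div_mul_le_self _ _
    have hqP2 : 2*N+1 < q * P + P := by
      have := Nat.lt_div_mul_add (a := 2*N+1) hP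
      rw [← hq] at this
      omega
    have eIcc : Finset.Icc (-(N:ℤ)) N = Finset.Ico (-(N:ℤ)) (N+1) := by
      ext k; simp
    have esplit : Finset.Ico (-(N:ℤ)) (N+1)
        = Finset.Ico (-(N:ℤ)) (-(N:ℤ) + q*P) ∪ Finset.Ico (-(N:ℤ) + q*P) (N+1) := by
      refine (Finset.Ico_union_Ico_eq_Ico (by omega) ?_).symm
      have : ((q*P : ℕ) : ℤ) ≤ ((2*N+1 : ℕ) : ℤ) := by exact_mod_cast hqP
      push_cast at this ⊢; omega
    have hcard : ((Finset.Icc (-(N:ℤ)) N).filter p).card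
        = q * c + ((Finset.Ico (-(N:ℤ) + q*P) (N+1:ℤ)).filter p).card := by
      rw [eIcc, esplit, Finset.filter_union, Finset.card_union_of_disjoint
        (Finset.disjoint_filter_filter (Finset.Ico_disjoint_Ico_consecutive _ _ _))]
      congr 1
      have : (-(N:ℤ) + q*P) = -(N:ℤ) + (q:ℕ)*(P:ℕ) := by push_cast; ring
      rw [count_blocks p P hper q (-(N:ℤ))]
    constructor
    · rw [hcard]; omega
    · rw [hcard]
      have : ((Finset.Ico (-(N:ℤ) + q*P) (N+1:ℤ)).filter p).card ≤ P := by
        calc ((Finset.Ico (-(N:ℤ) + q*P) (N+1:ℤ)).filter p).card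
            ≤ (Finset.Ico (-(N:ℤ) + q*P) (N+1:ℤ)).card := Finset.card_filter_le _ _
          _ = ((N+1:ℤ) - (-(N:ℤ) + q*P)).toNat := Int.card_Ico _ _
          _ ≤ P := by
              have : ((q*P : ℕ) : ℤ) ≤ ((2*N+1 : ℕ) : ℤ) := by exact_mod_cast hqP
              have h2 : ((2*N+1 : ℕ) : ℤ) < ((q*P + P : ℕ) : ℤ) := by exact_mod_cast hqP2
              push_cast at this h2 ⊢
              omega
      omega
  -- real estimate
  have est : ∀ N : ℕ, |(((Finset.Icc (-(N:ℤ)) N).filter p).card : ℝ) / (2*N+1) - (c:ℝ)/P|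
      ≤ (P:ℝ) / (2*N+1) := by
    intro N
    obtain ⟨h1, h2⟩ := key N
    set q : ℕ := (2*N+1)/P with hq
    have hqP : q * P ≤ 2*N+1 := Nat.div_mul_le_self _ _
    have hqP2 : 2*N+1 < q * P + P := by
      have := Nat.lt_div_mul_add (a := 2*N+1) hP
      rw [← hq] at this
      omega
    have hL : (0:ℝ) < 2*N+1 := by positivity
    have hPr : (0:ℝ) < P := by exact_mod_cast hP
    have hA1 : ((q:ℝ) * c) ≤ (((Finset.Icc (-(N:ℤ)) N).filter p).card : ℝ) := by exact_mod_cast h1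
    have hA2 : (((Finset.Icc (-(N:ℤ)) N).filter p).card : ℝ) ≤ (q:ℝ)*c + P := by exact_mod_cast h2
    have hq1 : (q:ℝ) * P ≤ 2*N+1 := by exact_mod_cast hqP
    have hq2 : (2*(N:ℝ)+1) ≤ (q:ℝ)*P + P := by
      have : ((2*N+1 : ℕ):ℝ) ≤ ((q*P + P : ℕ):ℝ) := by exact_mod_cast hqP2.le
      push_cast at this; linarith
    have hc0 : (0:ℝ) ≤ c := by positivity
    have hcPr : (c:ℝ) ≤ P := by exact_mod_cast hcP
    set A : ℝ := (((Finset.Icc (-(N:ℤ)) N).filter p).card : ℝ)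
    set L : ℝ := 2*(N:ℝ)+1
    have key1 : A * P ≤ L*c + P*P := by nlinarith
    have key2 : L * c ≤ A*P + P*P := by nlinarith
    have habs : |A/L - (c:ℝ)/P| = |A*P - L*c| / (L*P) := by
      rw [div_sub_div _ _ hL.ne' hPr.ne', abs_div, abs_of_pos (mul_pos hL hPr)]
    rw [habs]
    have : |A*P - L*c| ≤ P*P := abs_le.2 ⟨by linarith, by linarith⟩
    calc |A*P - L*c| / (L*P) ≤ (P*P)/(L*P) := by gcongr
      _ = (P:ℝ)/L := by rw [mul_comm L P, mul_div_mul_left _ _ hPr.ne']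
  have h0 : Tendsto (fun N : ℕ => (P:ℝ)/(2*N+1)) atTop (𝓝 0) := by
    apply Tendsto.div_atTop tendsto_const_nhds
    apply Filter.tendsto_atTop_add_const_right
    exact (tendsto_natCast_atTop_atTop).const_mul_atTop two_pos
  have h1 : Tendsto (fun N : ℕ =>
      (((Finset.Icc (-(N:ℤ)) N).filter p).card : ℝ) / (2*N+1) - (c:ℝ)/P) atTop (𝓝 0) :=
    squeeze_zero_norm (fun N => by simpa using est N) h0
  have h2 := h1.add (tendsto_const_nhds (x := (c:ℝ)/P))
  simpa using h2

open Classical in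
private lemma crt_count (b : ℕ → ℕ) (hpos : ∀ n, 0 < b n)
    (hcop : ∀ m n, m ≠ n → Nat.Coprime (b m) (b n)) (M : ℕ) :
    ((Finset.Ico (0:ℤ) ((∏ n ∈ Finset.range M, b n : ℕ) : ℤ)).filter
      (fun k : ℤ => ∀ n < M, ¬((b n : ℤ) ∣ k))).card
      = ∏ n ∈ Finset.range M, (b n - 1) := by
  classical
  rw [← Fin.prod_univ_eq_prod_range (fun n => b n) M,
      ← Fin.prod_univ_eq_prod_range (fun n => b n - 1) M]
  set Q : ℕ := ∏ i : Fin M, b i with hQ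
  have hQpos : 0 < Q := Finset.prod_pos (fun i _ => hpos i)
  haveI : NeZero Q := ⟨hQpos.ne'⟩
  have hpair : Pairwise (Function.onFun Nat.Coprime fun i : Fin M => b i) :=
    fun i j hij => hcop i j (fun h => hij (Fin.ext h))
  let e : ZMod Q ≃+* Π i : Fin M, ZMod (b i) := ZMod.prodEquivPi _ hpair
  have htrans : ∀ k : ℤ, (∀ n < M, ¬((b n:ℤ) ∣ k)) ↔ (∀ i : Fin M, e (k : ZMod Q) i ≠ 0) := by
    intro k
    have he : ∀ i : Fin M, e (k : ZMod Q) i = (k : ZMod (b i)) := by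
      intro i
      rw [map_intCast e k]
      rfl
    constructor
    · intro h i h0
      exact h i i.2 ((ZMod.intCast_zmod_eq_zero_iff_dvd k (b i)).mp (by rw [← he i]; exact h0))
    · intro h n hn hdvd
      exact h ⟨n, hn⟩ (by rw [he ⟨n, hn⟩]; exact (ZMod.intCast_zmod_eq_zero_iff_dvd k (b n)).mpr hdvd)
  have hcard1 : ((Finset.Ico (0:ℤ) (Q:ℤ)).filter (fun k : ℤ => ∀ n < M, ¬((b n:ℤ) ∣ k))).card
      = (Finset.univ.filter (fun r : ZMod Q => ∀ i : Fin M, e r i ≠ 0)).card := by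
    apply Finset.card_nbij (fun k : ℤ => (k : ZMod Q))
    · intro k hk
      simp only [Finset.mem_coe, Finset.mem_filter] at hk ⊢
      exact ⟨Finset.mem_univ _, (htrans k).mp hk.2⟩
    · intro k hk k' hk' hkk'
      simp only [Finset.coe_filter, Set.mem_setOf_eq, Finset.mem_Ico] at hk hk'
      have h1 : k ≡ k' [ZMOD (Q:ℕ)] := (ZMod.intCast_eq_intCast_iff k k' Q).mp hkk'
      have h2 : k % (Q:ℤ) = k' % (Q:ℤ) := h1
      rwa [Int.emod_eq_of_lt hk.1.1 hk.1.2, Int.emod_eq_of_lt hk'.1.1 hk'.1.2] at h2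
    · intro r hr
      simp only [Finset.coe_filter, Set.mem_setOf_eq, Finset.mem_univ, true_and] at hr
      refine ⟨(r.val : ℤ), ?_, ?_⟩
      · have hcast : ((r.val : ℤ) : ZMod Q) = r := by
          push_cast
          exact ZMod.natCast_rightInverse r
        simp only [Finset.coe_filter, Set.mem_setOf_eq, Finset.mem_Ico]
        refine ⟨⟨by positivity, by exact_mod_cast ZMod.val_lt r⟩, ?_⟩
        rw [htrans]
        rw [hcast]
        exact hr
      · push_cast
        exact ZMod.natCast_rightInverse r
  letI : ∀ i : Fin M, Fintype (ZMod (b i)) := fun i => @ZMod.fintype _ ⟨(hpos i).ne'⟩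
  letI : ∀ i : Fin M, NeZero (b i) := fun i => ⟨(hpos i).ne'⟩
  have hcard2 : (Finset.univ.filter (fun r : ZMod Q => ∀ i : Fin M, e r i ≠ 0)).card
      = ∏ i : Fin M, (b i - 1) := by
    have hbij : (Finset.univ.filter (fun r : ZMod Q => ∀ i : Fin M, e r i ≠ 0)).card
        = (Fintype.piFinset (fun i : Fin M =>
            Finset.univ.filter (fun x : ZMod (b i) => x ≠ 0))).card := by
      apply Finset.card_nbij (fun r => e r)
      · intro r hr
        simp only [Finset.mem_coe, Finset.mem_filter, Finset.mem_univ, true_and] at hr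
        simp only [Finset.mem_coe, Fintype.mem_piFinset, Finset.mem_filter, Finset.mem_univ, true_and]
        exact hr
      · exact fun x _ y _ h => e.injective h
      · intro v hv
        simp only [Finset.coe_filter, Set.mem_setOf_eq] at hv ⊢
        refine ⟨e.symm v, ⟨Finset.mem_univ _, ?_⟩, e.apply_symm_apply v⟩
        intro i
        rw [e.apply_symm_apply]
        have := (Fintype.mem_piFinset).mp hv i
        simpa using this
    rw [hbij, Fintype.card_piFinset]
    refine Finset.prod_congr rfl (fun i _ => ?_)
    rw [Finset.filter_ne', Finset.card_erase_of_mem (Finset.mem_univ _), Finset.card_univ,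
      ZMod.card]
  rw [hcard1, hcard2]

open Classical in
private lemma mult_bound (d N : ℕ) (hd : 0 < d) :
    (((Finset.Icc (-(N:ℤ)) N).filter (fun k : ℤ => (d:ℤ) ∣ k ∧ k ≠ 0)).card : ℝ)
      ≤ 2 * N / d := by
  set q : ℤ := (N:ℤ) / d with hqdef
  have hdz : (0:ℤ) < d := by exact_mod_cast hd
  have hq0 : 0 ≤ q := Int.ediv_nonneg (by positivity) hdz.le
  have hsub : ((Finset.Icc (-(N:ℤ)) N).filter (fun k : ℤ => (d:ℤ) ∣ k ∧ k ≠ 0)).card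
      ≤ ((Finset.Icc (-q) q).erase 0).card := by
    refine Finset.card_le_card_of_injOn (fun k => k / (d:ℤ)) ?_ ?_
    · intro k hk
      simp only [Finset.mem_coe, Finset.mem_filter, Finset.mem_Icc] at hk
      obtain ⟨⟨hk1, hk2⟩, ⟨j, hj⟩, hk0⟩ := hk
      have hkd : k / d = j := by rw [hj, Int.mul_ediv_cancel_left _ hdz.ne']
      simp only [Finset.mem_coe, Finset.mem_erase, Finset.mem_Icc, hkd]
      refine ⟨fun h => hk0 (by rw [hj, h, mul_zero]), ?_, ?_⟩
      · rw [neg_le, hqdef, Int.le_ediv_iff_mul_le hdz]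
        nlinarith [hj ▸ hk1]
      · rw [hqdef, Int.le_ediv_iff_mul_le hdz]
        nlinarith [hj ▸ hk2]
    · intro k hk k' hk' h
      simp only [Finset.coe_filter, Set.mem_setOf_eq] at hk hk'
      have e1 : k / (d:ℤ) * d = k := Int.ediv_mul_cancel hk.2.1
      have e2 : k' / (d:ℤ) * d = k' := Int.ediv_mul_cancel hk'.2.1
      simp only at h
      rw [← e1, ← e2, h]
  have hcard : ((Finset.Icc (-q) q).erase 0).card = (2*q).toNat := by
    rw [Finset.card_erase_of_mem (by simp [hq0]), Int.card_Icc]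
    omega
  have hqd : (q:ℝ) ≤ (N:ℝ)/d := by
    rw [le_div_iff₀ (by positivity : (0:ℝ) < (d:ℝ))]
    have : q * d ≤ (N:ℤ) := Int.ediv_mul_le _ hdz.ne'
    exact_mod_cast this
  calc (((Finset.Icc (-(N:ℤ)) N).filter (fun k : ℤ => (d:ℤ) ∣ k ∧ k ≠ 0)).card : ℝ)
      ≤ (((2*q).toNat : ℕ) : ℝ) := by exact_mod_cast hcard ▸ hsub
    _ = 2 * (q:ℝ) := by
        have : ((2*q).toNat : ℤ) = 2*q := Int.toNat_of_nonneg (by omega)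
        exact_mod_cast congrArg (fun z : ℤ => (z:ℝ)) this
    _ ≤ 2 * ((N:ℝ)/d) := by linarith
    _ = 2 * N / d := by ring
private lemma log_summable (b : ℕ → ℕ) (hb2 : ∀ n, 2 ≤ b n)
    (hsum : Summable (fun n => (1 : ℝ) / b n)) :
    Summable (fun n => Real.log (1 - 1 / (b n : ℝ))) := by
  apply Summable.of_norm_bounded (g := fun n => 2 * ((1:ℝ) / b n)) (hsum.mul_left 2)
  intro n
  set x : ℝ := 1 / (b n : ℝ) with hx
  have hb : (2:ℝ) ≤ (b n : ℝ) := by exact_mod_cast hb2 n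
  have hx0 : 0 < x := by rw [hx]; positivity
  have hx2 : x ≤ 1/2 := by
    rw [hx, div_le_div_iff₀ (by linarith) (by norm_num)]
    linarith
  have h1x : (0:ℝ) < 1 - x := by linarith
  have hlog_le : -Real.log (1 - x) ≤ 2*x := by
    rw [← Real.log_inv]
    have h1 : Real.log (1 - x)⁻¹ ≤ (1-x)⁻¹ - 1 :=
      Real.log_le_sub_one_of_pos (by positivity)
    have h2 : (1-x)⁻¹ ≤ 1 + 2*x := by
      rw [← one_div, div_le_iff₀ h1x]
      nlinarith
    linarith
  have hnorm : ‖Real.log (1 - x)‖ = -Real.log (1 - x) := by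
    rw [Real.norm_eq_abs, abs_of_nonpos (Real.log_nonpos (by linarith) (by linarith))]
  rw [hnorm]
  linarith

private lemma multipliable_one_sub (b : ℕ → ℕ) (hb2 : ∀ n, 2 ≤ b n)
    (hsum : Summable (fun n => (1 : ℝ) / b n)) :
    Multipliable (fun n => 1 - 1 / (b n : ℝ)) := by
  have := Real.multipliable_of_summable_log (f := fun n => 1 - 1 / (b n : ℝ))
    (fun n => by
      have hb : (2:ℝ) ≤ (b n : ℝ) := by exact_mod_cast hb2 n
      have : (1:ℝ)/(b n:ℝ) ≤ 1/2 := by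
        rw [div_le_div_iff₀ (by linarith) (by norm_num)]; linarith
      linarith)
    (log_summable b hb2 hsum)
  exact this

set_option maxHeartbeats 1000000 in
open Classical in
/-- If `(b n)` is a sequence of pairwise coprime positive integers with
`Σ 1/bₙ < ∞`, then the set of `𝔅`-free integers `𝔉 = ℤ \ ⋃ₙ bₙℤ` has density
`∏ₙ (1 − 1/bₙ)` along the intervals `{−N, …, N}`. -/
theorem bfree_density (b : ℕ → ℕ) (hpos : ∀ n, 0 < b n)
    (hcop : ∀ m n, m ≠ n → Nat.Coprime (b m) (b n))
    (hsum : Summable (fun n => (1 : ℝ) / b n)) :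
    Tendsto
      (fun N : ℕ =>
        (((Finset.Icc (-(N : ℤ)) (N : ℤ)).filter
          (fun k : ℤ => ∀ n : ℕ, ¬ ((b n : ℤ) ∣ k))).card : ℝ) / (2 * N + 1))
      atTop (nhds (∏' n : ℕ, (1 - 1 / (b n : ℝ)))) := by
  classical
  by_cases h1 : ∃ n0, b n0 = 1
  · -- degenerate case: some bₙ = 1, both sides are 0
    obtain ⟨n0, hn0⟩ := h1
    have hzero : ∀ N : ℕ, ((Finset.Icc (-(N : ℤ)) (N : ℤ)).filter
        (fun k : ℤ => ∀ n : ℕ, ¬ ((b n : ℤ) ∣ k))) = ∅ := by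
      intro N
      rw [Finset.filter_eq_empty_iff]
      intro k _ h
      exact h n0 (by rw [hn0]; exact one_dvd k)
    have h0 : (1 : ℝ) - 1 / (b n0 : ℝ) = 0 := by rw [hn0]; norm_num
    have hprod : (∏' n : ℕ, (1 - 1 / (b n : ℝ))) = 0 := by
      have hp : HasProd (fun n : ℕ => 1 - 1 / (b n : ℝ)) 0 := by
        rw [HasProd]
        have hev : ∀ᶠ s : Finset ℕ in atTop, ∏ i ∈ s, (1 - 1 / (b i : ℝ)) = 0 := by
          filter_upwards [Filter.eventually_ge_atTop ({n0} : Finset ℕ)] with s hs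
          exact Finset.prod_eq_zero (hs (Finset.mem_singleton_self n0)) h0
        exact Tendsto.congr' (by filter_upwards [hev] with s hs; exact hs.symm)
          tendsto_const_nhds
      exact hp.tprod_eq
    rw [hprod]
    have : (fun N : ℕ =>
        (((Finset.Icc (-(N : ℤ)) (N : ℤ)).filter
          (fun k : ℤ => ∀ n : ℕ, ¬ ((b n : ℤ) ∣ k))).card : ℝ) / (2 * N + 1))
        = fun _ => (0:ℝ) := by
      funext N; rw [hzero N]; simp
    rw [this]
    exact tendsto_const_nhds
  -- main case: all bₙ ≥ 2
  push_neg at h1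
  have hb2 : ∀ n, 2 ≤ b n := fun n => by have := hpos n; have := h1 n; omega
  have hinj : Function.Injective b := by
    intro m n h
    by_contra hmn
    have hc := hcop m n hmn
    rw [h, Nat.Coprime, Nat.gcd_self] at hc
    have := hb2 n; omega
  set L : ℝ := ∏' n : ℕ, (1 - 1 / (b n : ℝ)) with hL
  have hmult := multipliable_one_sub b hb2 hsum
  have hQlim : Tendsto (fun M => ∏ n ∈ Finset.range M, (1 - 1 / (b n : ℝ))) atTop (𝓝 L) :=
    hmult.hasProd.tendsto_prod_nat
  have htail : Tendsto (fun M => ∑' k : ℕ, (1:ℝ) / (b (k + M) : ℝ)) atTop (𝓝 0) :=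
    tendsto_sum_nat_add (fun n => (1:ℝ) / (b n : ℝ))
  -- per-M density
  have hM : ∀ M : ℕ, Tendsto (fun N : ℕ =>
      (((Finset.Icc (-(N : ℤ)) (N : ℤ)).filter
        (fun k : ℤ => ∀ n < M, ¬ ((b n : ℤ) ∣ k))).card : ℝ) / (2 * N + 1))
      atTop (𝓝 (∏ n ∈ Finset.range M, (1 - 1 / (b n : ℝ)))) := by
    intro M
    set P : ℕ := ∏ n ∈ Finset.range M, b n with hPdef
    have hPpos : 0 < P := Finset.prod_pos (fun n _ => hpos n)
    have hper : ∀ k : ℤ, (∀ n < M, ¬ ((b n : ℤ) ∣ (k + (P:ℤ)))) ↔ (∀ n < M, ¬ ((b n : ℤ) ∣ k)) := by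
      intro k
      have hdvd : ∀ n < M, (b n : ℤ) ∣ (P : ℤ) := fun n hn =>
        Int.natCast_dvd_natCast.mpr (Finset.dvd_prod_of_mem _ (Finset.mem_range.mpr hn))
      constructor
      · intro h n hn hd
        exact h n hn (dvd_add hd (hdvd n hn))
      · intro h n hn hd
        exact h n hn ((dvd_add_right (hdvd n hn)).mp (by rwa [add_comm] at hd))
    have hd := periodic_density (fun k : ℤ => ∀ n < M, ¬ ((b n : ℤ) ∣ k)) P hPpos hper
    have hval : ((((Finset.Ico (0:ℤ) (P:ℤ)).filter
        (fun k : ℤ => ∀ n < M, ¬ ((b n : ℤ) ∣ k))).card : ℝ)) / (P:ℝ)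
        = ∏ n ∈ Finset.range M, (1 - 1 / (b n : ℝ)) := by
      rw [crt_count b hpos hcop M, hPdef]
      rw [Nat.cast_prod, Nat.cast_prod, ← Finset.prod_div_distrib]
      refine Finset.prod_congr rfl (fun n _ => ?_)
      have hb : (0:ℝ) < (b n : ℝ) := by exact_mod_cast hpos n
      rw [Nat.cast_sub (hpos n), sub_div, div_self hb.ne']
      norm_num
    rw [← hval]
    exact hd
  rw [Metric.tendsto_atTop]
  intro ε hε
  obtain ⟨M₁, hM₁⟩ := Metric.tendsto_atTop.mp hQlim (ε/4) (by linarith)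
  obtain ⟨M₂, hM₂⟩ := Metric.tendsto_atTop.mp htail (ε/4) (by linarith)
  set M : ℕ := max (max M₁ M₂) 1 with hMdef
  have hMge1 : 1 ≤ M := le_max_right _ _
  set Q : ℝ := ∏ n ∈ Finset.range M, (1 - 1 / (b n : ℝ)) with hQdef
  set t : ℝ := ∑' k : ℕ, (1:ℝ) / (b (k + M) : ℝ) with htdef
  have ht0' : 0 ≤ ∑' k : ℕ, (1:ℝ) / (b (k + M) : ℝ) := tsum_nonneg (fun k => by positivity)
  have ht0 : 0 ≤ t := ht0'
  have htlt : t < ε/4 := by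
    have h := hM₂ M (le_trans (le_max_right _ _) (le_max_left _ _))
    rw [Real.dist_eq, sub_zero, abs_of_nonneg ht0'] at h
    exact htdef ▸ h
  have hQclose : |Q - L| < ε/4 := by
    have := hM₁ M (le_trans (le_max_left _ _) (le_max_left _ _))
    rwa [Real.dist_eq] at this
  obtain ⟨N₀, hN₀⟩ := Metric.tendsto_atTop.mp (hM M) (ε/4) (by linarith)
  refine ⟨N₀, fun N hN => ?_⟩
  set F : Finset ℤ := (Finset.Icc (-(N : ℤ)) (N : ℤ)).filter
    (fun k : ℤ => ∀ n : ℕ, ¬ ((b n : ℤ) ∣ k)) with hF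
  set FM : Finset ℤ := (Finset.Icc (-(N : ℤ)) (N : ℤ)).filter
    (fun k : ℤ => ∀ n < M, ¬ ((b n : ℤ) ∣ k)) with hFM
  have hsub : F ⊆ FM := by
    rw [hF, hFM]
    intro k hk
    rw [Finset.mem_filter] at hk ⊢
    exact ⟨hk.1, fun n _ => hk.2 n⟩
  -- bound on the difference
  have hfinT : {n : ℕ | M ≤ n ∧ b n ≤ N}.Finite :=
    Set.Finite.subset (Set.Finite.preimage hinj.injOn (Set.finite_Iic N))
      (fun n hn => hn.2)
  set T : Finset ℕ := hfinT.toFinset with hT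
  have hcover : FM \ F ⊆ T.biUnion (fun n => (Finset.Icc (-(N : ℤ)) (N : ℤ)).filter
      (fun k : ℤ => (b n : ℤ) ∣ k ∧ k ≠ 0)) := by
    intro k hk
    rw [Finset.mem_sdiff, hFM, hF, Finset.mem_filter, Finset.mem_filter] at hk
    obtain ⟨⟨hIcc, hpM⟩, hnF⟩ := hk
    have hfull : ∃ n : ℕ, (b n : ℤ) ∣ k := by
      by_contra hc
      push_neg at hc
      exact hnF ⟨hIcc, hc⟩
    obtain ⟨n, hn⟩ := hfull
    have hk0 : k ≠ 0 := by
      intro h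
      exact hpM 0 hMge1 (h ▸ dvd_zero _)
    have hnM : M ≤ n := by
      by_contra h
      exact hpM n (lt_of_not_ge h) hn
    have hbn : b n ≤ N := by
      have habs : (b n : ℤ) ≤ |k| := Int.le_of_dvd (abs_pos.mpr hk0) ((dvd_abs _ _).mpr hn)
      have hle : |k| ≤ N := abs_le.mpr (Finset.mem_Icc.mp hIcc)
      exact_mod_cast le_trans habs hle
    rw [Finset.mem_biUnion]
    exact ⟨n, hfinT.mem_toFinset.mpr ⟨hnM, hbn⟩, Finset.mem_filter.mpr ⟨hIcc, hn, hk0⟩⟩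
  have hdiffbound : (((FM \ F).card : ℕ) : ℝ) ≤ 2 * N * t := by
    have h1 : (FM \ F).card ≤ ∑ n ∈ T, ((Finset.Icc (-(N : ℤ)) (N : ℤ)).filter
        (fun k : ℤ => (b n : ℤ) ∣ k ∧ k ≠ 0)).card :=
      le_trans (Finset.card_le_card hcover) (Finset.card_biUnion_le)
    have h2 : (((FM \ F).card : ℕ) : ℝ) ≤ ∑ n ∈ T, (2 * (N:ℝ) / (b n : ℝ)) := by
      calc (((FM \ F).card : ℕ) : ℝ) ≤ (∑ n ∈ T, (((Finset.Icc (-(N : ℤ)) (N : ℤ)).filter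
            (fun k : ℤ => (b n : ℤ) ∣ k ∧ k ≠ 0)).card : ℝ)) := by
            exact_mod_cast h1
        _ ≤ ∑ n ∈ T, (2 * (N:ℝ) / (b n : ℝ)) :=
            Finset.sum_le_sum (fun n _ => mult_bound (b n) N (hpos n))
    have h3 : ∑ n ∈ T, (2 * (N:ℝ) / (b n : ℝ)) = 2 * N * ∑ n ∈ T, (1:ℝ) / (b n : ℝ) := by
      rw [Finset.mul_sum]
      refine Finset.sum_congr rfl (fun n _ => ?_)
      ring
    have h4 : ∑ n ∈ T, (1:ℝ) / (b n : ℝ) ≤ t := by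
      have himg : ∑ n ∈ T, (1:ℝ) / (b n : ℝ)
          = ∑ m ∈ T.image (· - M), (1:ℝ) / (b (m + M) : ℝ) := by
        rw [Finset.sum_image (by
          intro x hx y hy h
          have hx' := (hfinT.mem_toFinset.mp hx).1
          have hy' := (hfinT.mem_toFinset.mp hy).1
          simp only at h
          omega)]
        refine Finset.sum_congr rfl (fun n hn => ?_)
        have hn' := (hfinT.mem_toFinset.mp hn).1
        rw [Nat.sub_add_cancel hn']
      rw [himg, htdef]
      exact ((summable_nat_add_iff M).mpr hsum).sum_le_tsum _ (fun i _ => by positivity)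
    calc (((FM \ F).card : ℕ) : ℝ) ≤ ∑ n ∈ T, (2 * (N:ℝ) / (b n : ℝ)) := h2
      _ = 2 * N * ∑ n ∈ T, (1:ℝ) / (b n : ℝ) := h3
      _ ≤ 2 * N * t := by
          have : (0:ℝ) ≤ 2 * N := by positivity
          exact mul_le_mul_of_nonneg_left h4 this
  have hcards : (FM.card : ℝ) - F.card = ((FM \ F).card : ℕ) := by
    rw [Finset.card_sdiff_of_subset hsub]
    have := Finset.card_le_card hsub
    push_cast [Nat.cast_sub this]
    ring
  have hLpos : (0:ℝ) < 2 * N + 1 := by positivity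
  have hdiff : |((F.card : ℝ) / (2 * N + 1)) - ((FM.card : ℝ) / (2 * N + 1))| ≤ t := by
    rw [div_sub_div_same, abs_div, abs_of_pos hLpos]
    rw [div_le_iff₀ hLpos]
    have h5 : |(F.card : ℝ) - FM.card| = (FM.card : ℝ) - F.card := by
      rw [abs_sub_comm, abs_of_nonneg]
      have := Finset.card_le_card hsub
      have : (F.card : ℝ) ≤ FM.card := by exact_mod_cast this
      linarith
    rw [h5, hcards]
    calc (((FM \ F).card : ℕ) : ℝ) ≤ 2 * N * t := hdiffbound
      _ ≤ t * (2 * N + 1) := by nlinarith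
  have hclose := hN₀ N hN
  rw [Real.dist_eq] at hclose ⊢
  rw [← hFM, ← hQdef] at hclose
  have habs := abs_sub_le ((F.card : ℝ) / (2 * N + 1)) ((FM.card : ℝ) / (2 * N + 1)) L
  have habs2 := abs_sub_le ((FM.card : ℝ) / (2 * N + 1)) Q L
  have habs3 := abs_abs_sub_abs_le_abs_sub ((F.card : ℝ) / (2 * N + 1)) ((FM.card : ℝ) / (2 * N + 1))
  linarith [hdiff, htlt, hclose, hQclose, habs, habs2]
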